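/- As p → +∞, the (p+1)-th power of the maximum of u_p satisfies ‖u_p‖_∞^{p+1} = (p/2)(1 + o_p(1)), i.e. lim_{p→+∞} ‖u_p‖_∞^{p+1} / p = 1/2. -/

import Mathlib

open Real Set Filter Topology

noncomputable section

/-- `u` is the (unique) positive solution of the one-dimensional Lane–Emden problem
`-u'' = u^p` on `(-1,1)` with `u(-1) = u(1) = 0`; it is even, positive on `(-1,1)`,
decreasing on `[0,1]`, and its sup norm is attained at `0`. -/
def IsLaneEmden (p : ℝ) (u : ℝ → ℝ) : Prop :=
  ContDiff ℝ 2 u ∧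
  (∀ t ∈ Ioo (-1 : ℝ) 1, deriv (deriv u) t = -(u t ^ p)) ∧
  u (-1) = 0 ∧ u 1 = 0 ∧
  (∀ t ∈ Ioo (-1 : ℝ) 1, 0 < u t) ∧
  (∀ t : ℝ, u (-t) = u t) ∧
  (∀ ⦃s t : ℝ⦄, s ∈ Icc (0 : ℝ) 1 → t ∈ Icc (0 : ℝ) 1 → s ≤ t → u t ≤ u s) ∧
  (∀ t ∈ Icc (-1 : ℝ) 1, u t ≤ u 0)

variable {p : ℝ} {u : ℝ → ℝ}

lemma IsLaneEmden.diff (h : IsLaneEmden p u) : Differentiable ℝ u := by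
  exact h.1.differentiable (by norm_num)

lemma IsLaneEmden.diff' (h : IsLaneEmden p u) : Differentiable ℝ (deriv u) := by
  have h2 : ContDiff ℝ ((1 : ℕ) + 1) u := by exact_mod_cast h.1
  rw [contDiff_succ_iff_deriv] at h2
  exact h2.2.2.differentiable (by norm_num)

lemma IsLaneEmden.deriv0 (h : IsLaneEmden p u) : deriv u 0 = 0 := by
  have heq : (fun t => u (-t)) = u := funext fun t => h.2.2.2.2.2.1 t
  have h1 : HasDerivAt (fun t : ℝ => u (-t)) (-(deriv u 0)) 0 := by
    have := ((IsLaneEmden.diff h (-0)).hasDerivAt).comp 0 (hasDerivAt_neg 0)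
    simp at this; exact this
  rw [heq] at h1
  have h2 := (IsLaneEmden.diff h 0).hasDerivAt
  have := h1.unique h2
  linarith

lemma IsLaneEmden.energy (h : IsLaneEmden p u) (hp : 1 < p) :
    ∀ t ∈ Ioo (-1 : ℝ) 1,
      (deriv u t) ^ 2 + (2 / (p + 1)) * u t ^ (p + 1) = (2 / (p + 1)) * u 0 ^ (p + 1) := by
  set E : ℝ → ℝ := fun t => (deriv u t) ^ 2 + (2 / (p + 1)) * u t ^ (p + 1) with hE
  have hp1 : (0:ℝ) < p + 1 := by linarith
  have hder : ∀ t ∈ Ioo (-1 : ℝ) 1, HasDerivAt E 0 t := by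
    intro t ht
    have h1 : HasDerivAt (fun s => (deriv u s) ^ 2) (2 * deriv u t * deriv (deriv u) t) t := by
      have := ((h.diff' t).hasDerivAt).pow 2
      simp at this; exact this
    have h2 : HasDerivAt (fun s => u s ^ (p + 1)) ((p + 1) * u t ^ p * deriv u t) t := by
      have hb : HasDerivAt (fun x : ℝ => x ^ (p + 1)) ((p + 1) * u t ^ (p + 1 - 1)) (u t) :=
        Real.hasDerivAt_rpow_const (Or.inr (by linarith))
      have := hb.comp t (h.diff t).hasDerivAt
      simp [add_sub_cancel_right] at this; exact this
    have h3 := h1.add (h2.const_mul (2 / (p + 1)))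
    have hode := h.2.1 t ht
    convert (show HasDerivAt E _ t from h3) using 1
    rw [hode]
    field_simp
    ring
  intro t ht
  have key : ∀ a ∈ Ioo (-1:ℝ) 1, ∀ b ∈ Ioo (-1:ℝ) 1, a ≤ b → E b = E a := by
    intro a ha b hb hab
    have hcont : ContinuousOn E (Icc a b) := by
      apply Continuous.continuousOn
      exact ((h.diff'.continuous.pow 2).add (continuous_const.mul
        ((Real.continuous_rpow_const (by linarith)).comp h.diff.continuous)))
    have := constant_of_has_deriv_right_zero hcont (fun x hx => by
      have hxm : x ∈ Ioo (-1:ℝ) 1 := ⟨lt_of_lt_of_le ha.1 hx.1, lt_of_le_of_lt (le_of_lt hx.2) hb.2⟩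
      exact (hder x hxm).hasDerivWithinAt)
    exact this b ⟨hab, le_refl b⟩
  have h0 : (0:ℝ) ∈ Ioo (-1:ℝ) 1 := by norm_num
  have : E t = E 0 := by
    rcases le_total (0:ℝ) t with hc | hc
    · exact key 0 h0 t ht hc
    · exact (key t ht 0 h0 hc).symm
  have hd0 := h.deriv0
  rw [hE] at this
  simp only at this
  rw [hd0] at this
  simpa using this

lemma IsLaneEmden.Mpos (h : IsLaneEmden p u) : 0 < u 0 := h.2.2.2.2.1 0 (by norm_num)

lemma IsLaneEmden.lower (h : IsLaneEmden p u) (hp : 1 < p) :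
    (p + 1) / 2 ≤ u 0 ^ (p - 1) := by
  have hM : 0 < u 0 := h.Mpos
  have hp1 : (0:ℝ) < p + 1 := by linarith
  obtain ⟨c, hc, hslope⟩ := exists_deriv_eq_slope u (by norm_num : (0:ℝ) < 1)
    (h.diff.continuous.continuousOn) (h.diff.differentiableOn)
  have hcIoo : c ∈ Ioo (-1:ℝ) 1 := ⟨by linarith [hc.1], hc.2⟩
  have hE := h.energy hp c hcIoo
  rw [hslope, h.2.2.2.1] at hE
  have huc : 0 ≤ u c := le_of_lt (h.2.2.2.2.1 c hcIoo)
  have hucp : 0 ≤ u c ^ (p + 1) := Real.rpow_nonneg huc _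
  have key : u 0 ^ 2 ≤ (2 / (p + 1)) * u 0 ^ (p + 1) := by
    have : ((0 - u 0) / (1 - 0)) ^ 2 = u 0 ^ 2 := by ring_nf
    nlinarith [hE, this, mul_nonneg (by positivity : (0:ℝ) ≤ 2/(p+1)) hucp]
  have hsplit : u 0 ^ (p + 1) = u 0 ^ (p - 1) * u 0 ^ 2 := by
    rw [show p + 1 = (p - 1) + 2 by ring, Real.rpow_add hM, Real.rpow_two]
  rw [hsplit] at key
  have hu2 : 0 < u 0 ^ 2 := by positivity
  have key2 : (p + 1) * u 0 ^ 2 ≤ 2 * (u 0 ^ (p - 1) * u 0 ^ 2) := by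
    have := mul_le_mul_of_nonneg_left key (le_of_lt hp1)
    calc (p + 1) * u 0 ^ 2 ≤ (p + 1) * (2 / (p + 1) * (u 0 ^ (p - 1) * u 0 ^ 2)) := this
      _ = 2 * (u 0 ^ (p - 1) * u 0 ^ 2) := by field_simp
  nlinarith [key2, hu2]

set_option maxHeartbeats 1000000 in
lemma IsLaneEmden.upper (h : IsLaneEmden p u) (hp2 : 2 ≤ p)
    (hx2 : Real.log p / p ≤ 1 / 2) (hlog2 : 2 * (Real.log p) ^ 2 ≤ p) :
    u 0 ^ ((p - 1) / 2) ≤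
      Real.sqrt (2 * Real.exp 1 * Real.log p) + Real.sqrt ((p + 1) / (2 * (1 - 1 / p))) := by
  have hp : 1 < p := by linarith
  have hppos : (0:ℝ) < p := by linarith
  have hM : 0 < u 0 := h.Mpos
  set M := u 0 with hMdef
  set x := Real.log p / p with hxdef
  set θ := 1 - x with hθdef
  have hlogp : 0 < Real.log p := Real.log_pos hp
  have hx0 : 0 < x := by positivity
  have hxp : x * p = Real.log p := by rw [hxdef]; field_simp
  have hθhalf : 1 / 2 ≤ θ := by rw [hθdef]; linarith
  have hθpos : 0 < θ := by linarith
  have hθlt : θ < 1 := by rw [hθdef]; linarith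
  -- θ^p ≤ 1/p
  have hθp : θ ^ p ≤ 1 / p := by
    have hlogθ : Real.log θ ≤ -x := by
      have := Real.log_le_sub_one_of_pos hθpos
      linarith
    rw [Real.rpow_def_of_pos hθpos]
    calc Real.exp (Real.log θ * p) ≤ Real.exp (-x * p) := by
          apply Real.exp_le_exp.2; nlinarith
      _ = 1 / p := by
          rw [neg_mul, hxp, Real.exp_neg, Real.exp_log hppos, one_div]
  -- θ^(-p) ≤ e * p
  have hθinv : (θ ^ p)⁻¹ ≤ Real.exp 1 * p := by
    have hlogθ' : -Real.log θ ≤ x / θ := by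
      have := Real.log_le_sub_one_of_pos (inv_pos.2 hθpos)
      rw [Real.log_inv] at this
      have hθne : θ ≠ 0 := ne_of_gt hθpos
      have h2 : θ⁻¹ - 1 = x / θ := by
        rw [hθdef]
        have hne : (1 - x) ≠ 0 := by rw [hθdef] at hθpos; linarith
        field_simp
        ring
      linarith [h2 ▸ this]
    have hkey : -Real.log θ * p ≤ Real.log p + 1 := by
      have h1 : -Real.log θ * p ≤ (x / θ) * p := by nlinarith
      have h2 : (x / θ) * p ≤ Real.log p + 1 := by
        rw [div_mul_eq_mul_div, hxp, div_le_iff₀ hθpos]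
        have hxlog : x * Real.log p ≤ 1 / 2 := by
          have : x * Real.log p = (Real.log p) ^ 2 / p := by rw [hxdef]; ring
          rw [this, div_le_iff₀ hppos]; nlinarith
        nlinarith [hlogp]
      linarith
    rw [Real.rpow_def_of_pos hθpos, ← Real.exp_neg]
    calc Real.exp (-(Real.log θ * p)) ≤ Real.exp (Real.log p + 1) := by
          apply Real.exp_le_exp.2; linarith
      _ = Real.exp 1 * p := by
          rw [Real.exp_add, Real.exp_log hppos]; ring
  -- find t₀ with u t₀ = θ*M
  have hucont : ContinuousOn u (Icc (0:ℝ) 1) := h.diff.continuous.continuousOn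
  have hmem : θ * M ∈ Icc (u 1) (u 0) := by
    constructor
    · rw [h.2.2.2.1]; positivity
    · rw [← hMdef]; exact mul_le_of_le_one_left hM.le hθlt.le
  obtain ⟨t₀, ht₀, hut₀⟩ := intermediate_value_Icc' (by norm_num : (0:ℝ) ≤ 1) hucont hmem
  have ht₀0 : 0 ≤ t₀ := ht₀.1
  have ht₀1 : t₀ < 1 := by
    rcases lt_or_eq_of_le ht₀.2 with h1 | h1
    · exact h1
    · exfalso; rw [h1, h.2.2.2.1] at hut₀
      exact absurd hut₀.symm (ne_of_gt (mul_pos hθpos hM))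
  -- Step 1 : bound on t₀
  set c₁ := (θ * M) ^ p with hc₁
  have hc₁pos : 0 < c₁ := Real.rpow_pos_of_pos (by positivity) p
  have hulb : ∀ t ∈ Icc (0:ℝ) t₀, θ * M ≤ u t := by
    intro t ht
    have h1 : t ∈ Icc (0:ℝ) 1 := ⟨ht.1, le_trans ht.2 (le_of_lt ht₀1)⟩
    have h2 : t₀ ∈ Icc (0:ℝ) 1 := ht₀
    have := h.2.2.2.2.2.2.1 h1 h2 ht.2
    rw [hut₀] at this
    exact this
  have hφanti : AntitoneOn (fun t => deriv u t + c₁ * t) (Icc 0 t₀) := by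
    apply antitoneOn_of_deriv_nonpos (convex_Icc _ _)
    · exact (h.diff'.continuous.add (continuous_const.mul continuous_id)).continuousOn
    · exact (h.diff'.add (differentiable_id.const_mul c₁)).differentiableOn
    · intro t ht
      rw [interior_Icc] at ht
      have hder : deriv (fun t => deriv u t + c₁ * t) t = deriv (deriv u) t + c₁ := by
        have h2 : HasDerivAt (fun s : ℝ => c₁ * s) c₁ t := by
          simpa using (hasDerivAt_id t).const_mul c₁
        exact (((h.diff' t).hasDerivAt).add h2).deriv
      rw [hder, h.2.1 t ⟨by linarith [ht.1], lt_trans ht.2 ht₀1⟩]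
      have hub : c₁ ≤ u t ^ p :=
        Real.rpow_le_rpow (by positivity) (hulb t ⟨le_of_lt ht.1, le_of_lt ht.2⟩) (by linarith)
      linarith
  have hφ : ∀ t ∈ Icc (0:ℝ) t₀, deriv u t + c₁ * t ≤ 0 := by
    intro t ht
    have := hφanti (left_mem_Icc.2 ht₀0) ht ht.1
    simpa [h.deriv0] using this
  have hψanti : AntitoneOn (fun t => u t + c₁ / 2 * t ^ 2) (Icc 0 t₀) := by
    apply antitoneOn_of_deriv_nonpos (convex_Icc _ _)
    · exact (h.diff.continuous.add (continuous_const.mul (continuous_pow 2))).continuousOn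
    · exact (h.diff.add ((differentiable_pow 2).const_mul _)).differentiableOn
    · intro t ht
      rw [interior_Icc] at ht
      have hder : deriv (fun t => u t + c₁ / 2 * t ^ 2) t = deriv u t + c₁ * t := by
        have h2 : HasDerivAt (fun s : ℝ => c₁ / 2 * s ^ 2) (c₁ * t) t := by
          have := (hasDerivAt_pow 2 t).const_mul (c₁ / 2)
          convert (show HasDerivAt (fun s : ℝ => c₁ / 2 * s ^ 2) _ t from this) using 1
          simp; ring
        exact (((h.diff t).hasDerivAt).add h2).deriv
      rw [hder]
      exact hφ t ⟨le_of_lt ht.1, le_of_lt ht.2⟩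
  have hstep1 : θ * M + c₁ / 2 * t₀ ^ 2 ≤ M := by
    have := hψanti (left_mem_Icc.2 ht₀0) (right_mem_Icc.2 ht₀0) ht₀0
    simp only [ne_eq] at this
    rw [hut₀] at this
    simpa using this
  -- Step 2 : bound on 1 - t₀
  obtain ⟨c, hc, hslope⟩ := exists_deriv_eq_slope u ht₀1
    (h.diff.continuous.continuousOn) (h.diff.differentiableOn)
  have hcIoo : c ∈ Ioo (-1:ℝ) 1 := ⟨by linarith [hc.1], hc.2⟩
  have hE := h.energy hp c hcIoo
  have hcIcc : c ∈ Icc (0:ℝ) 1 := ⟨by linarith [hc.1], le_of_lt hc.2⟩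
  have hucle : u c ≤ θ * M := by
    have := h.2.2.2.2.2.2.1 ht₀ hcIcc (le_of_lt hc.1)
    rw [hut₀] at this; linarith
  have hucnn : 0 ≤ u c := le_of_lt (h.2.2.2.2.1 c hcIoo)
  have hpow : u c ^ (p+1) ≤ θ^(p+1) * M^(p+1) := by
    calc u c ^ (p+1) ≤ (θ*M)^(p+1) := Real.rpow_le_rpow hucnn hucle (by linarith)
      _ = θ^(p+1) * M^(p+1) := Real.mul_rpow hθpos.le hM.le
  set D := 1 - θ^(p+1) with hD
  have hθp1 : θ^(p+1) ≤ 1/p :=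
    le_trans (Real.rpow_le_rpow_of_exponent_ge hθpos hθlt.le (by linarith)) hθp
  have hip : 0 < 1 - 1/p := by
    rw [sub_pos, div_lt_one hppos]; linarith
  have hDlb : 1 - 1/p ≤ D := by rw [hD]; linarith
  have hDpos : 0 < D := lt_of_lt_of_le hip hDlb
  have h1t : 0 < 1 - t₀ := by linarith
  rw [← hMdef] at hE
  have e2 : (deriv u c)^2 * (1-t₀)^2 = θ^2*M^2 := by
    rw [hslope, h.2.2.2.1, hut₀]
    field_simp
    ring
  have e1 : (2/(p+1)) * M^(p+1) * D ≤ (deriv u c)^2 := by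
    have hmul : (2/(p+1)) * (u c ^ (p+1)) ≤ (2/(p+1)) * (θ^(p+1)*M^(p+1)) :=
      mul_le_mul_of_nonneg_left hpow (by positivity)
    have hexp : (2/(p+1)) * M^(p+1) * D
        = (2/(p+1)) * M^(p+1) - (2/(p+1)) * (θ^(p+1)*M^(p+1)) := by rw [hD]; ring
    rw [hexp]
    linarith [hE]
  have key2 : (2/(p+1)) * M^(p+1) * D * (1-t₀)^2 ≤ θ^2*M^2 := by
    calc (2/(p+1)) * M^(p+1) * D * (1-t₀)^2
        ≤ (deriv u c)^2 * (1-t₀)^2 := mul_le_mul_of_nonneg_right e1 (sq_nonneg _)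
      _ = θ^2*M^2 := e2
  -- combine
  set Q := M ^ ((p-1)/2) with hQ
  have hQpos : 0 < Q := Real.rpow_pos_of_pos hM _
  have hQsq : Q^2 = M^(p-1) := by
    rw [sq, hQ, ← Real.rpow_add hM]; ring_nf
  have hMp : M^(p:ℝ) = M^(p-1) * M := by
    rw [show p = (p-1)+1 by ring, Real.rpow_add hM, Real.rpow_one]
    ring_nf
  have hMp1 : M^(p+1) = M^(p-1) * M^2 := by
    rw [show p + 1 = (p - 1) + 2 by ring, Real.rpow_add hM, Real.rpow_two]
  have hTpos : 0 < θ^(p:ℝ) := Real.rpow_pos_of_pos hθpos p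
  have hApos : 0 < M^(p-1:ℝ) := Real.rpow_pos_of_pos hM _
  -- bound t₀ * Q
  have hb1 : (t₀*Q)^2 * θ^p ≤ 2*(1-θ) := by
    have h1 : c₁/2*t₀^2 ≤ (1-θ)*M := by
      have hre : (1-θ)*M = M - θ*M := by ring
      linarith [hstep1]
    have hc₁eq : c₁ = θ^p * (M^(p-1) * M) := by
      rw [hc₁, Real.mul_rpow hθpos.le hM.le, hMp]
    calc (t₀*Q)^2 * θ^p = (c₁/2*t₀^2) * (2/M) := by
          rw [mul_pow, hQsq, hc₁eq]; field_simp
      _ ≤ ((1-θ)*M) * (2/M) := mul_le_mul_of_nonneg_right h1 (by positivity)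
      _ = 2*(1-θ) := by field_simp
  have ht₀Q : t₀ * Q ≤ Real.sqrt (2*Real.exp 1*Real.log p) := by
    have h2 : (t₀*Q)^2 ≤ 2*Real.exp 1*Real.log p := by
      calc (t₀*Q)^2 = (t₀*Q)^2*θ^p*(θ^p)⁻¹ := by field_simp
        _ ≤ (2*(1-θ))*(θ^p)⁻¹ := mul_le_mul_of_nonneg_right hb1 (by positivity)
        _ = 2*x*(θ^p)⁻¹ := by rw [hθdef]; ring_nf
        _ ≤ 2*x*(Real.exp 1*p) := mul_le_mul_of_nonneg_left hθinv (by positivity)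
        _ = 2*Real.exp 1*Real.log p := by rw [← hxp]; ring
    calc t₀*Q = Real.sqrt ((t₀*Q)^2) := (Real.sqrt_sq (mul_nonneg ht₀0 hQpos.le)).symm
      _ ≤ _ := Real.sqrt_le_sqrt h2
  -- bound (1-t₀) * Q
  have h1tQ : (1-t₀) * Q ≤ Real.sqrt ((p+1)/(2*(1-1/p))) := by
    have h2 : ((1-t₀)*Q)^2 ≤ (p+1)/(2*(1-1/p)) := by
      calc ((1-t₀)*Q)^2
          = ((2/(p+1))*M^(p+1)*D*(1-t₀)^2) * ((p+1)/(2*M^2*D)) := by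
            rw [mul_pow, hQsq, hMp1]; field_simp
        _ ≤ (θ^2*M^2) * ((p+1)/(2*M^2*D)) := mul_le_mul_of_nonneg_right key2 (by positivity)
        _ = θ^2 * ((p+1)/(2*D)) := by field_simp
        _ ≤ 1 * ((p+1)/(2*(1-1/p))) := by
            have hθsq : θ^2 ≤ 1 := by
              calc θ^2 = θ*θ := sq θ
                _ ≤ θ := mul_le_of_le_one_left hθpos.le hθlt.le
                _ ≤ 1 := hθlt.le
            apply mul_le_mul hθsq _ (by positivity) (by norm_num)
            exact div_le_div_of_nonneg_left (by linarith) (by positivity) (by linarith)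
        _ = (p+1)/(2*(1-1/p)) := one_mul _
    calc (1-t₀)*Q = Real.sqrt (((1-t₀)*Q)^2) :=
          (Real.sqrt_sq (mul_nonneg h1t.le hQpos.le)).symm
      _ ≤ _ := Real.sqrt_le_sqrt h2
  calc Q = t₀*Q + (1-t₀)*Q := by ring
    _ ≤ _ := add_le_add ht₀Q h1tQ

def laneB (p : ℝ) : ℝ :=
  Real.sqrt (2 * Real.exp 1 * Real.log p) + Real.sqrt ((p + 1) / (2 * (1 - 1 / p)))

lemma tendsto_log_div : Tendsto (fun p : ℝ => Real.log p / p) atTop (𝓝 0) :=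
  Real.isLittleO_log_id_atTop.tendsto_div_nhds_zero

lemma tendsto_logsq_div : Tendsto (fun p : ℝ => (Real.log p) ^ 2 / p) atTop (𝓝 0) := by
  have h1 := isLittleO_log_rpow_atTop (by norm_num : (0:ℝ) < 1/2)
  have h2 := h1.mul h1
  have h3 : (fun x : ℝ => x ^ (1/2:ℝ) * x ^ (1/2:ℝ)) =ᶠ[atTop] fun x => x := by
    filter_upwards [eventually_gt_atTop (0:ℝ)] with x hx
    rw [← Real.rpow_add hx]
    norm_num
  have h4 : (fun x : ℝ => (Real.log x) ^ 2) =o[atTop] fun x : ℝ => x := by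
    refine Asymptotics.IsLittleO.congr' h2 ?_ h3
    filter_upwards with x
    ring
  exact h4.tendsto_div_nhds_zero

lemma tendsto_p_div : Tendsto (fun p : ℝ => p / (p - 1)) atTop (𝓝 1) := by
  have h1 : Tendsto (fun p : ℝ => 1 + 1 / (p - 1)) atTop (𝓝 1) := by
    have := tendsto_const_nhds.div_atTop
      (tendsto_atTop_add_const_right atTop (-1 : ℝ) tendsto_id) (a := (1:ℝ))
    have h2 := (tendsto_const_nhds (x := (1:ℝ)) (f := atTop)).add this
    simpa [sub_eq_add_neg] using h2
  apply h1.congr'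
  filter_upwards [eventually_gt_atTop (1:ℝ)] with p hp
  have hne : p - 1 ≠ 0 := by linarith
  field_simp
  ring

lemma tendsto_lower : Tendsto (fun p : ℝ => (p + 1) / (2 * p)) atTop (𝓝 (1/2)) := by
  have h1 : Tendsto (fun p : ℝ => (1 + 1 / p) / 2) atTop (𝓝 (1/2)) := by
    have h0 : Tendsto (fun p : ℝ => 1 + 1 / p) atTop (𝓝 1) := by
      have := tendsto_const_nhds.div_atTop (tendsto_id (α := ℝ)) (a := (1:ℝ))
      simpa using (tendsto_const_nhds (x := (1:ℝ)) (f := atTop)).add this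
    simpa using h0.div_const 2
  apply h1.congr'
  filter_upwards [eventually_gt_atTop (0:ℝ)] with p hp
  have h2 : (1:ℝ) + 1/p = (p+1)/p := by
    rw [add_div, div_self (ne_of_gt hp)]
  rw [h2, div_div, mul_comm p 2]

lemma tendsto_arg2 :
    Tendsto (fun p : ℝ => (p + 1) / (2 * (1 - 1 / p) * p)) atTop (𝓝 (1/2)) := by
  have hnum : Tendsto (fun p : ℝ => 1 + 1 / p) atTop (𝓝 1) := by
    have := tendsto_const_nhds.div_atTop (tendsto_id (α := ℝ)) (a := (1:ℝ))
    simpa using (tendsto_const_nhds (x := (1:ℝ)) (f := atTop)).add this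
  have hden : Tendsto (fun p : ℝ => 2 * (1 - 1 / p)) atTop (𝓝 2) := by
    have h1 : Tendsto (fun p : ℝ => 1 - 1 / p) atTop (𝓝 1) := by
      have := tendsto_const_nhds.div_atTop (tendsto_id (α := ℝ)) (a := (1:ℝ))
      simpa using (tendsto_const_nhds (x := (1:ℝ)) (f := atTop)).sub this
    simpa using h1.const_mul 2
  have h := hnum.div hden (by norm_num)
  apply h.congr'
  filter_upwards [eventually_gt_atTop (0:ℝ)] with p hp
  have h2 : (1:ℝ) + 1/p = (p+1)/p := by rw [add_div, div_self (ne_of_gt hp)]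
  simp only [Pi.div_apply]
  rw [h2, div_div, mul_comm p (2 * (1 - 1/p))]

lemma tendsto_laneB_div_sqrt :
    Tendsto (fun p : ℝ => laneB p / Real.sqrt p) atTop (𝓝 (Real.sqrt (1/2))) := by
  have h1 : Tendsto (fun p : ℝ => Real.sqrt (2 * Real.exp 1 * Real.log p / p)) atTop (𝓝 0) := by
    have harg : Tendsto (fun p : ℝ => 2 * Real.exp 1 * Real.log p / p) atTop (𝓝 0) := by
      have := tendsto_log_div.const_mul (2 * Real.exp 1)
      apply this.congr' ?_ |>.mono_right ?_
      · filter_upwards with p; ring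
      · simp
    simpa using harg.sqrt
  have h2 : Tendsto (fun p : ℝ => Real.sqrt ((p + 1) / (2 * (1 - 1 / p) * p))) atTop
      (𝓝 (Real.sqrt (1/2))) := tendsto_arg2.sqrt
  have h3 := h1.add h2
  rw [zero_add] at h3
  apply h3.congr'
  filter_upwards [eventually_ge_atTop (2:ℝ)] with p hp
  have hp0 : (0:ℝ) < p := by linarith
  have hlognn : 0 ≤ Real.log p := Real.log_nonneg (by linarith)
  have hargnn : 0 ≤ 2 * Real.exp 1 * Real.log p := by positivity
  have hpnn : 0 ≤ p + 1 := by linarith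
  rw [laneB, add_div (Real.sqrt (2 * Real.exp 1 * Real.log p))
    (Real.sqrt ((p + 1) / (2 * (1 - 1 / p)))) (Real.sqrt p)]
  congr 1
  · exact Real.sqrt_div hargnn p
  · have hinv : (1:ℝ)/p ≤ 1/2 := by
      rw [div_le_div_iff₀ hp0 (by norm_num)]; linarith
    have hq : (0:ℝ) ≤ (p + 1) / (2 * (1 - 1/p)) := by
      apply div_nonneg hpnn; linarith
    rw [← div_div, Real.sqrt_div hq p]

lemma tendsto_laneB_sq_div :
    Tendsto (fun p : ℝ => (laneB p) ^ 2 / p) atTop (𝓝 (1/2)) := by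
  have h := (tendsto_laneB_div_sqrt.pow 2)
  rw [Real.sq_sqrt (by norm_num : (0:ℝ) ≤ 1/2)] at h
  apply h.congr'
  filter_upwards [eventually_gt_atTop (0:ℝ)] with p hp
  rw [div_pow, Real.sq_sqrt hp.le]

lemma laneB_one_le : ∀ᶠ p : ℝ in atTop, 1 ≤ laneB p := by
  filter_upwards [eventually_ge_atTop (2:ℝ)] with p hp
  have hp0 : (0:ℝ) < p := by linarith
  have hinv : (1:ℝ)/p ≤ 1/2 := by rw [div_le_div_iff₀ hp0 (by norm_num)]; linarith
  have hden : 0 < 2 * (1 - 1/p) := by linarith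
  have h1 : (1:ℝ) ≤ (p + 1) / (2 * (1 - 1/p)) := by
    rw [one_le_div hden]
    have : (1:ℝ)/p > 0 := by positivity
    linarith
  calc (1:ℝ) = Real.sqrt 1 := Real.sqrt_one.symm
    _ ≤ Real.sqrt ((p + 1) / (2 * (1 - 1/p))) := Real.sqrt_le_sqrt h1
    _ ≤ laneB p := le_add_of_nonneg_left (Real.sqrt_nonneg _)

lemma laneB_le_self : ∀ᶠ p : ℝ in atTop, laneB p ≤ p := by
  filter_upwards [eventually_ge_atTop (24:ℝ)] with p hp
  have hp0 : (0:ℝ) < p := by linarith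
  have hlog : Real.log p ≤ p := (Real.log_le_sub_one_of_pos hp0).trans (by linarith)
  have hlognn : 0 ≤ Real.log p := Real.log_nonneg (by linarith)
  have he : Real.exp 1 ≤ 3 := by have := Real.exp_one_lt_d9; linarith
  have t1 : Real.sqrt (2 * Real.exp 1 * Real.log p) ≤ p / 2 := by
    have ha : 2 * Real.exp 1 * Real.log p ≤ (p/2)^2 := by
      have h1 : 2 * Real.exp 1 * Real.log p ≤ 6 * p := by
        nlinarith [mul_le_mul_of_nonneg_right he hlognn]
      nlinarith
    calc Real.sqrt (2 * Real.exp 1 * Real.log p) ≤ Real.sqrt ((p/2)^2) :=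
          Real.sqrt_le_sqrt ha
      _ = p/2 := Real.sqrt_sq (by linarith)
  have t2 : Real.sqrt ((p + 1) / (2 * (1 - 1/p))) ≤ p / 2 := by
    have hinv : (1:ℝ)/p ≤ 1/2 := by rw [div_le_div_iff₀ hp0 (by norm_num)]; linarith
    have hden : (1:ℝ) ≤ 2 * (1 - 1/p) := by linarith
    have ha : (p + 1) / (2 * (1 - 1/p)) ≤ (p/2)^2 := by
      calc (p + 1) / (2 * (1 - 1/p)) ≤ p + 1 := div_le_self (by linarith) hden
        _ ≤ (p/2)^2 := by nlinarith
    calc Real.sqrt ((p + 1) / (2 * (1 - 1/p))) ≤ Real.sqrt ((p/2)^2) := Real.sqrt_le_sqrt ha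
      _ = p/2 := Real.sqrt_sq (by linarith)
  calc laneB p ≤ p/2 + p/2 := add_le_add t1 t2
    _ = p := by ring

lemma tendsto_rpow_self_div : Tendsto (fun p : ℝ => p ^ (4/(p-1))) atTop (𝓝 1) := by
  have h0 : Tendsto (fun p : ℝ => Real.log p * (4/(p-1))) atTop (𝓝 0) := by
    have h1 : Tendsto (fun p : ℝ => 4 * ((Real.log p / p) * (p/(p-1)))) atTop
        (𝓝 (4 * (0 * 1))) := ((tendsto_log_div.mul tendsto_p_div).const_mul 4)
    simp only [zero_mul, mul_zero] at h1
    apply h1.congr'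
    filter_upwards [eventually_gt_atTop (1:ℝ)] with p hp
    have h1 : p ≠ 0 := by linarith
    have h2 : p - 1 ≠ 0 := by linarith
    field_simp
  have h2 : Tendsto (fun p : ℝ => Real.exp (Real.log p * (4/(p-1)))) atTop (𝓝 1) := by
    have := (Real.continuous_exp.continuousAt (x := (0:ℝ))).tendsto.comp h0
    simpa [Function.comp_def] using this
  apply h2.congr'
  filter_upwards [eventually_gt_atTop (0:ℝ)] with p hp
  rw [Real.rpow_def_of_pos hp]

lemma tendsto_laneB_rpow : Tendsto (fun p : ℝ => (laneB p) ^ (4/(p-1))) atTop (𝓝 1) := by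
  apply tendsto_of_tendsto_of_tendsto_of_le_of_le' tendsto_const_nhds tendsto_rpow_self_div
  · filter_upwards [laneB_one_le, eventually_gt_atTop (1:ℝ)] with p h1 hp
    exact Real.one_le_rpow h1 (div_nonneg (by norm_num) (by linarith))
  · filter_upwards [laneB_one_le, laneB_le_self, eventually_gt_atTop (1:ℝ)] with p h1 h2 hp
    exact Real.rpow_le_rpow (by linarith) h2 (div_nonneg (by norm_num) (by linarith))

/-- `‖u_p‖_∞^(p+1) = (p/2)(1 + o_p(1))` as `p → +∞`. -/
theorem sup_norm_pow_succ_asymptotics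
    (u : ℝ → ℝ → ℝ) (hu : ∀ p : ℝ, 1 < p → IsLaneEmden p (u p)) :
    Tendsto (fun p : ℝ => u p 0 ^ (p + 1) / p) atTop (𝓝 (1 / 2)) := by
  have hupperlim : Tendsto (fun p : ℝ => (laneB p)^2/p * (laneB p)^(4/(p-1)))
      atTop (𝓝 (1/2)) := by
    have := tendsto_laneB_sq_div.mul tendsto_laneB_rpow
    simpa using this
  apply tendsto_of_tendsto_of_tendsto_of_le_of_le' tendsto_lower hupperlim
  · -- lower bound
    filter_upwards [eventually_ge_atTop (2:ℝ)] with p hp2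
    have hp : (1:ℝ) < p := by linarith
    have hp0 : (0:ℝ) < p := by linarith
    have hle := hu p hp
    have hM : 0 < u p 0 := hle.Mpos
    have hlow := hle.lower hp
    have hM1 : 1 ≤ u p 0 := by
      by_contra hc
      push_neg at hc
      have := Real.rpow_lt_one hM.le hc (by linarith : (0:ℝ) < p - 1)
      linarith
    have hsplit : u p 0 ^ (p+1) = u p 0 ^ (p-1) * u p 0 ^ 2 := by
      rw [show p + 1 = (p - 1) + 2 by ring, Real.rpow_add hM, Real.rpow_two]
    have hM2 : (1:ℝ) ≤ u p 0 ^ 2 := by nlinarith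
    have hmul : (p+1)/2 ≤ u p 0 ^ (p+1) := by
      rw [hsplit]
      calc (p+1)/2 = (p+1)/2 * 1 := (mul_one _).symm
        _ ≤ u p 0 ^ (p-1) * u p 0 ^ 2 :=
            mul_le_mul hlow hM2 (by norm_num) (Real.rpow_nonneg hM.le _)
    rw [show (p+1)/(2*p) = ((p+1)/2)/p from by rw [div_div]]
    exact (div_le_div_iff_of_pos_right hp0).2 hmul
  · -- upper bound
    filter_upwards [eventually_ge_atTop (2:ℝ),
      tendsto_log_div.eventually_lt_const (by norm_num : (0:ℝ) < 1/2),
      tendsto_logsq_div.eventually_lt_const (by norm_num : (0:ℝ) < 1/2)] with p hp2 hhalf hlsq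
    have hp : (1:ℝ) < p := by linarith
    have hp0 : (0:ℝ) < p := by linarith
    have hle := hu p hp
    have hM : 0 < u p 0 := hle.Mpos
    have hlsq' : 2 * (Real.log p)^2 ≤ p := by
      rw [div_lt_iff₀ hp0] at hlsq; nlinarith [hlsq]
    have hupp : u p 0 ^ ((p-1)/2) ≤ laneB p := hle.upper hp2 hhalf.le hlsq'
    have hB0 : 0 ≤ laneB p := le_trans (Real.rpow_nonneg hM.le _) hupp
    have hqsq : (u p 0 ^ ((p-1)/2))^2 = u p 0 ^ (p-1) := by
      rw [sq, ← Real.rpow_add hM]; ring_nf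
    have hMub : u p 0 ^ (p-1) ≤ (laneB p)^2 := by
      rw [← hqsq]; exact pow_le_pow_left₀ (Real.rpow_nonneg hM.le _) hupp 2
    have hne : p - 1 ≠ 0 := by linarith
    have e1 : (u p 0 ^ ((p-1)/2)) ^ ((2:ℝ)/(p-1)) = u p 0 := by
      rw [← Real.rpow_mul hM.le, show ((p-1)/2)*(2/(p-1)) = 1 from by
        field_simp, Real.rpow_one]
    have e2 : u p 0 ≤ (laneB p)^((2:ℝ)/(p-1)) := by
      rw [← e1]
      exact Real.rpow_le_rpow (Real.rpow_nonneg hM.le _) hupp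
        (div_nonneg (by norm_num) (by linarith))
    have e3 : u p 0 ^ 2 ≤ (laneB p)^((4:ℝ)/(p-1)) := by
      have h4 : ((laneB p)^((2:ℝ)/(p-1)))^2 = (laneB p)^((4:ℝ)/(p-1)) := by
        rw [← Real.rpow_two, ← Real.rpow_mul hB0, show (2/(p-1))*2 = 4/(p-1) from by ring]
      calc u p 0 ^ 2 ≤ ((laneB p)^((2:ℝ)/(p-1)))^2 := pow_le_pow_left₀ hM.le e2 2
        _ = _ := h4
    have hsplit : u p 0 ^ (p+1) = u p 0 ^ (p-1) * u p 0 ^ 2 := by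
      rw [show p + 1 = (p - 1) + 2 by ring, Real.rpow_add hM, Real.rpow_two]
    have hfin : u p 0 ^ (p+1) ≤ (laneB p)^2 * (laneB p)^((4:ℝ)/(p-1)) := by
      rw [hsplit]
      exact mul_le_mul hMub e3 (sq_nonneg _) (sq_nonneg _)
    calc u p 0 ^ (p+1)/p ≤ ((laneB p)^2 * (laneB p)^((4:ℝ)/(p-1)))/p :=
          (div_le_div_iff_of_pos_right hp0).2 hfin
      _ = (laneB p)^2/p * (laneB p)^((4:ℝ)/(p-1)) := by ring
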